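/- Let Q' and Q be finite sets, σ an alphabet, δ' : Q' → σ → Q' and δ : Q → σ → Q transition functions, q₀' ∈ Q' an initial state with a unique final state f' ∈ Q' satisfying f' ≠ q₀', q₀ ∈ Q an initial state, and F ⊆ Q final states. Assume each DFA is minimal (every state is reachable from the initial state and distinct states are distinguishable by some word), and assume that for every letter a ∈ σ the maps δ'(·, a) : Q' → Q' and δ(·, a) : Q → Q are bijections (i.e., the transition semigroups are groups). Consider the subset construction for the product NFA: states are subsets X of the disjoint union Q' ⊕ Q; the initial subset is {q₀'}; and the transition of X under a letter a is Y ∪ {q₀ if f' ∈ Y}, where Y is the image of X under δ'(·,a) on the Q'-part and δ(·,a) on the Q-part. Call a subset reachable if some word maps the initial subset to it. If every singleton {p'} with p' ∈ Q' \ {f'} is reachable and every subset {q₀', q} with q ∈ Q is reachable, then every subset of the form {p'} ∪ S with p' ∈ Q' \ {f'} and S ⊆ Q is reachable, and every subset of the form {f', q₀} ∪ S with S ⊆ Q \ {q₀} is reachable. -/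

import Mathlib

/-- One step of the subset construction for the product NFA of two DFAs: apply the letter
componentwise, then add the initial state `q₀` of the second DFA whenever the resulting
subset contains the final state `f'` of the first DFA (the ε-transition). -/
def prodStep {Q' Q σ : Type*} (δ' : Q' → σ → Q') (δ : Q → σ → Q) (f' : Q') (q₀ : Q)
    (X : Set (Q' ⊕ Q)) (a : σ) : Set (Q' ⊕ Q) :=
  (Sum.map (fun p => δ' p a) (fun q => δ q a)) '' X ∪
    {x | x = Sum.inr q₀ ∧ Sum.inl f' ∈ (Sum.map (fun p => δ' p a) (fun q => δ q a)) '' X}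

/-- A subset is reachable in the subset construction if some word maps the initial
subset `{q₀'}` to it. -/
def prodReachable {Q' Q σ : Type*} (δ' : Q' → σ → Q') (δ : Q → σ → Q)
    (q₀' f' : Q') (q₀ : Q) (X : Set (Q' ⊕ Q)) : Prop :=
  ∃ w : List σ, w.foldl (prodStep δ' δ f' q₀) {Sum.inl q₀'} = X

namespace Davies

variable {Q' Q σ : Type*}

/-- spawn set: all states produced from ε-transitions along the run of `w` from
a set with single primed state `p`. -/
def spawn (δ' : Q' → σ → Q') (δ : Q → σ → Q) (f' : Q') (q₀ : Q) (w : List σ) (p : Q') : Set Q :=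
  {q | ∃ w₁ w₂, w = w₁ ++ w₂ ∧ w₁ ≠ [] ∧ w₁.foldl δ' p = f' ∧ w₂.foldl δ q₀ = q}

lemma foldl_bijective (δ : Q → σ → Q) (hbij : ∀ a : σ, Function.Bijective fun q => δ q a)
    (w : List σ) : Function.Bijective (fun q => w.foldl δ q) := by
  induction w with
  | nil => exact Function.bijective_id
  | cons a t ih =>
    have h := ih.comp (hbij a)
    have : (fun q => (a :: t).foldl δ q) = (fun q => t.foldl δ q) ∘ (fun q => δ q a) := rfl
    rw [this]; exact h

open Classical in
lemma step_mixed (δ' : Q' → σ → Q') (δ : Q → σ → Q) (f' : Q') (q₀ : Q) (p : Q') (S : Set Q)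
    (a : σ) :
    prodStep δ' δ f' q₀ ({Sum.inl p} ∪ Sum.inr '' S) a
      = {Sum.inl (δ' p a)} ∪
        Sum.inr '' ((fun q => δ q a) '' S ∪ (if δ' p a = f' then {q₀} else ∅)) := by
  have himg : (Sum.map (fun p => δ' p a) (fun q => δ q a)) '' ({Sum.inl p} ∪ Sum.inr '' S)
      = {Sum.inl (δ' p a)} ∪ Sum.inr '' ((fun q => δ q a) '' S) := by
    rw [Set.image_union, Set.image_singleton, Set.image_image, Set.image_image]
    rfl
  have hmem : (Sum.inl f' ∈ (Sum.map (fun p => δ' p a) (fun q => δ q a)) ''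
      ({Sum.inl p} ∪ Sum.inr '' S)) ↔ δ' p a = f' := by
    rw [himg]
    constructor
    · rintro (h | ⟨q, _, h⟩)
      · exact (Sum.inl.inj (Set.mem_singleton_iff.mp h)).symm
      · exact absurd h (by simp)
    · intro h; left; simp [h]
  unfold prodStep
  rw [himg]
  by_cases h : δ' p a = f'
  · ext x
    simp only [Set.mem_union, Set.mem_setOf_eq, hmem, h, if_pos, Set.image_union]
    rcases x with p₁ | q₁ <;> simp [h] <;> tauto
  · ext x
    simp only [Set.mem_union, Set.mem_setOf_eq, hmem, h, if_neg]
    rcases x with p₁ | q₁ <;> simp [h] <;> tauto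


lemma spawn_nil (δ' : Q' → σ → Q') (δ : Q → σ → Q) (f' : Q') (q₀ : Q) (p : Q') :
    spawn δ' δ f' q₀ ([] : List σ) p = ∅ := by
  ext q
  simp only [spawn, Set.mem_setOf_eq, Set.mem_empty_iff_false, iff_false]
  rintro ⟨w₁, w₂, hw, hne, -, -⟩
  exact hne (List.append_eq_nil_iff.mp hw.symm).1

open Classical in
lemma spawn_cons (δ' : Q' → σ → Q') (δ : Q → σ → Q) (f' : Q') (q₀ : Q) (p : Q')
    (a : σ) (t : List σ) :
    spawn δ' δ f' q₀ (a :: t) p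
      = (fun q => t.foldl δ q) '' (if δ' p a = f' then {q₀} else ∅)
        ∪ spawn δ' δ f' q₀ t (δ' p a) := by
  ext q
  constructor
  · rintro ⟨w₁, w₂, hw, hne, hf, hq⟩
    rcases w₁ with _ | ⟨b, v⟩
    · exact absurd rfl hne
    · rw [List.cons_append] at hw
      obtain ⟨hb, ht⟩ : a = b ∧ t = v ++ w₂ := by
        constructor
        · exact (List.head_eq_of_cons_eq hw)
        · exact (List.tail_eq_of_cons_eq hw)
      rcases v with _ | ⟨c, v'⟩
      · left
        simp only [List.nil_append] at ht
        have hfa : δ' p a = f' := by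
          rw [hb]; simpa using hf
        rw [if_pos hfa]
        exact ⟨q₀, rfl, by rw [← ht] at hq; exact hq⟩
      · right
        refine ⟨c :: v', w₂, ht, by simp, ?_, hq⟩
        have : (b :: c :: v').foldl δ' p = (c :: v').foldl δ' (δ' p b) := by
          simp [List.foldl_cons]
        rw [this] at hf
        rw [hb]
        exact hf
  · rintro (⟨q', hq', hq⟩ | ⟨v, w₂, ht, hvne, hf, hq⟩)
    · by_cases hfa : δ' p a = f'
      · rw [if_pos hfa] at hq'
        rw [Set.mem_singleton_iff.mp hq'] at hq
        exact ⟨[a], t, rfl, by simp, by simpa using hfa, hq⟩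
      · rw [if_neg hfa] at hq'
        exact absurd hq' (Set.notMem_empty q')
    · refine ⟨a :: v, w₂, by rw [List.cons_append, ht], by simp, ?_, hq⟩
      simpa [List.foldl_cons] using hf

lemma run_mixed (δ' : Q' → σ → Q') (δ : Q → σ → Q) (f' : Q') (q₀ : Q)
    (w : List σ) (p : Q') (S : Set Q) :
    w.foldl (prodStep δ' δ f' q₀) ({Sum.inl p} ∪ Sum.inr '' S)
      = {Sum.inl (w.foldl δ' p)} ∪
        Sum.inr '' ((fun q => w.foldl δ q) '' S ∪ spawn δ' δ f' q₀ w p) := by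
  induction w generalizing p S with
  | nil => simp [spawn_nil]
  | cons a t ih =>
    rw [List.foldl_cons, step_mixed, ih, spawn_cons]
    simp only [Set.image_union, Set.image_image, List.foldl_cons, Set.union_assoc]

lemma run_pure (δ' : Q' → σ → Q') (δ : Q → σ → Q) (f' : Q') (q₀ : Q)
    (w : List σ) (p : Q') (S : Set Q)
    (hav : ∀ w₁ w₂ : List σ, w = w₁ ++ w₂ → w₁ ≠ [] → w₁.foldl δ' p ≠ f') :
    w.foldl (prodStep δ' δ f' q₀) ({Sum.inl p} ∪ Sum.inr '' S)
      = {Sum.inl (w.foldl δ' p)} ∪ Sum.inr '' ((fun q => w.foldl δ q) '' S) := by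
  rw [run_mixed]
  have hsp : spawn δ' δ f' q₀ w p = ∅ := by
    ext x
    simp only [spawn, Set.mem_setOf_eq, Set.mem_empty_iff_false, iff_false]
    rintro ⟨w₁, w₂, hw, hne, hfw, -⟩
    exact hav w₁ w₂ hw hne hfw
  rw [hsp, Set.union_empty]

lemma run_spawn_end (δ' : Q' → σ → Q') (δ : Q → σ → Q) (f' : Q') (q₀ : Q)
    (w : List σ) (p : Q') (S : Set Q) (hne : w ≠ []) (hend : w.foldl δ' p = f')
    (hav : ∀ w₁ w₂ : List σ, w = w₁ ++ w₂ → w₁ ≠ [] → w₂ ≠ [] → w₁.foldl δ' p ≠ f') :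
    w.foldl (prodStep δ' δ f' q₀) ({Sum.inl p} ∪ Sum.inr '' S)
      = {Sum.inl f'} ∪ Sum.inr '' ((fun q => w.foldl δ q) '' S ∪ {q₀}) := by
  rw [run_mixed, hend]
  have hsp : spawn δ' δ f' q₀ w p = {q₀} := by
    ext x
    simp only [spawn, Set.mem_setOf_eq, Set.mem_singleton_iff]
    constructor
    · rintro ⟨w₁, w₂, hw, hne₁, hfw, hx⟩
      rcases eq_or_ne w₂ [] with h2 | h2
      · subst h2
        simpa using hx.symm
      · exact absurd hfw (hav w₁ w₂ hw hne₁ h2)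
    · rintro rfl
      exact ⟨w, [], by simp, hne, hend, rfl⟩
  rw [hsp]

lemma start_eq (q₀' : Q') : ({Sum.inl q₀'} : Set (Q' ⊕ Q)) = {Sum.inl q₀'} ∪ Sum.inr '' (∅ : Set Q) := by
  simp

lemma extract_single (δ' : Q' → σ → Q') (δ : Q → σ → Q) (q₀' f' : Q') (q₀ : Q)
    (p' : Q') (w : List σ)
    (hw : w.foldl (prodStep δ' δ f' q₀) {Sum.inl q₀'} = {Sum.inl p'}) :
    w.foldl δ' q₀' = p' ∧
      ∀ w₁ w₂ : List σ, w = w₁ ++ w₂ → w₁ ≠ [] → w₁.foldl δ' q₀' ≠ f' := by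
  rw [start_eq, run_mixed, Set.image_empty, Set.empty_union] at hw
  have hsp : spawn δ' δ f' q₀ w q₀' = ∅ := by
    ext x
    simp only [Set.mem_empty_iff_false, iff_false]
    intro hx
    have : (Sum.inr x : Q' ⊕ Q) ∈ ({Sum.inl p'} : Set (Q' ⊕ Q)) := by
      rw [← hw]; right; exact ⟨x, hx, rfl⟩
    simp at this
  constructor
  · have : (Sum.inl (w.foldl δ' q₀') : Q' ⊕ Q) ∈ ({Sum.inl p'} : Set (Q' ⊕ Q)) := by
      rw [← hw]; left; rfl
    simpa using this
  · intro w₁ w₂ hsplit hne hfw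
    have : w₂.foldl δ q₀ ∈ spawn δ' δ f' q₀ w q₀' := ⟨w₁, w₂, hsplit, hne, hfw, rfl⟩
    rw [hsp] at this
    exact this

lemma extract_pair (δ' : Q' → σ → Q') (δ : Q → σ → Q) (q₀' f' : Q') (q₀ : Q)
    (q : Q) (w : List σ)
    (hw : w.foldl (prodStep δ' δ f' q₀) {Sum.inl q₀'} = {Sum.inl q₀', Sum.inr q}) :
    ∃ y : List σ, y.foldl δ' f' = q₀' ∧
      (∀ v₁ v₂ : List σ, y = v₁ ++ v₂ → v₁ ≠ [] → v₁.foldl δ' f' ≠ f') ∧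
      y.foldl δ q₀ = q := by
  classical
  rw [start_eq, run_mixed, Set.image_empty, Set.empty_union] at hw
  have hF : w.foldl δ' q₀' = q₀' := by
    have : (Sum.inl (w.foldl δ' q₀') : Q' ⊕ Q) ∈ ({Sum.inl q₀', Sum.inr q} : Set (Q' ⊕ Q)) := by
      rw [← hw]; left; rfl
    rcases this with h | h
    · simpa using h
    · simp at h
  have hsub : ∀ x ∈ spawn δ' δ f' q₀ w q₀', x = q := by
    intro x hx
    have : (Sum.inr x : Q' ⊕ Q) ∈ ({Sum.inl q₀', Sum.inr q} : Set (Q' ⊕ Q)) := by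
      rw [← hw]; right; exact ⟨x, hx, rfl⟩
    rcases this with h | h
    · simp at h
    · simpa using h
  have hqmem : q ∈ spawn δ' δ f' q₀ w q₀' := by
    have : (Sum.inr q : Q' ⊕ Q) ∈ {Sum.inl (w.foldl δ' q₀')} ∪
        Sum.inr '' spawn δ' δ f' q₀ w q₀' := by
      rw [hw]; right; rfl
    rcases this with h | ⟨x, hx, hxe⟩
    · simp at h
    · rwa [← Sum.inr.inj hxe]
  obtain ⟨w₁, w₂, hsplit, hne₁, hhit, -⟩ := hqmem
  -- take the LAST index where the run of `w` in Q' visits f'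
  set P : ℕ → Prop := fun n => (w.take n) ≠ [] ∧ (w.take n).foldl δ' q₀' = f' with hP
  have hPm : P w₁.length := by
    constructor
    · rw [hsplit, List.take_left]; exact hne₁
    · rw [hsplit, List.take_left]; exact hhit
  have hmle : w₁.length ≤ w.length := by
    rw [hsplit, List.length_append]; omega
  set i : ℕ := Nat.findGreatest P w.length with hi
  have hPi : P i := Nat.findGreatest_spec hmle hPm
  have hile : i ≤ w.length := Nat.findGreatest_le _
  have hlen_take : (w.take i).length = i := by
    rw [List.length_take]; omega
  refine ⟨w.drop i, ?_, ?_, ?_⟩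
  · have hsp : (w.take i).foldl δ' q₀' = f' := hPi.2
    have := List.take_append_drop i w
    calc (w.drop i).foldl δ' f' = (w.drop i).foldl δ' ((w.take i).foldl δ' q₀') := by rw [hsp]
      _ = (w.take i ++ w.drop i).foldl δ' q₀' := by rw [List.foldl_append]
      _ = w.foldl δ' q₀' := by rw [this]
      _ = q₀' := hF
  · intro v₁ v₂ hv hne hfv
    have hwdec : w = (w.take i ++ v₁) ++ v₂ := by
      rw [List.append_assoc, ← hv, List.take_append_drop]
    have hlen : (w.take i ++ v₁).length = i + v₁.length := by
      rw [List.length_append, hlen_take]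
    have htk : w.take (i + v₁.length) = w.take i ++ v₁ := by
      conv_lhs => rw [hwdec]
      exact List.take_left' hlen
    have hPn : P (i + v₁.length) := by
      constructor
      · rw [htk]
        intro hcontra
        exact hne (List.append_eq_nil_iff.mp hcontra).2
      · rw [htk, List.foldl_append, hPi.2, hfv]
    have hnle : i + v₁.length ≤ w.length := by
      rw [hwdec, List.length_append, hlen]; omega
    have hgt : i < i + v₁.length := by
      have : v₁.length ≠ 0 := fun h => hne (List.length_eq_zero_iff.mp h)
      omega
    exact Nat.findGreatest_is_greatest hgt hnle hPn
  · exact hsub _ ⟨w.take i, w.drop i, (List.take_append_drop i w).symm, hPi.1, hPi.2, rfl⟩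

lemma extract_first_hit (δ' : Q' → σ → Q') (q₀' f' : Q') (hf : f' ≠ q₀')
    (w : List σ) (hw : w.foldl δ' q₀' = f') :
    ∃ u : List σ, u ≠ [] ∧ u.foldl δ' q₀' = f' ∧
      ∀ w₁ w₂ : List σ, u = w₁ ++ w₂ → w₁ ≠ [] → w₂ ≠ [] → w₁.foldl δ' q₀' ≠ f' := by
  classical
  set P : ℕ → Prop := fun n => (w.take n) ≠ [] ∧ (w.take n).foldl δ' q₀' = f' with hP
  have hwne : w ≠ [] := by
    intro h; rw [h] at hw; exact hf (by simpa using hw.symm)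
  have hPw : P w.length := by
    constructor
    · rw [List.take_length]; exact hwne
    · rw [List.take_length]; exact hw
  have hex : ∃ n, P n := ⟨w.length, hPw⟩
  set i : ℕ := Nat.find hex with hi
  have hPi : P i := Nat.find_spec hex
  have hile : i ≤ w.length := Nat.find_min' hex hPw
  have hlen_take : (w.take i).length = i := by
    rw [List.length_take]; omega
  refine ⟨w.take i, hPi.1, hPi.2, ?_⟩
  intro w₁ w₂ hsplit hne₁ hne₂ hfw
  have hj : w₁.length < i := by
    have : (w.take i).length = w₁.length + w₂.length := by
      rw [hsplit, List.length_append]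
    have h2 : w₂.length ≠ 0 := fun h => hne₂ (List.length_eq_zero_iff.mp h)
    omega
  have htk : w.take w₁.length = w₁ := by
    have h1 : (w.take i).take w₁.length = w₁ := by
      rw [hsplit, List.take_left]
    rw [List.take_take] at h1
    rwa [min_eq_left (le_of_lt hj)] at h1
  have hPj : P w₁.length := by
    constructor
    · rw [htk]; exact hne₁
    · rw [htk]; exact hfw
  exact Nat.find_min hex hj hPj

end Davies

open Davies

/-- Sylvie Davies' lemma: for the product of two minimal DFAs whose
transition monoids are groups, if all singletons `{p'}` (`p' ≠ f'`) and all pairs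
`{q₀', q}` are reachable in the subset construction, then all subsets
`{p'} ∪ S` (`p' ≠ f'`, `S ⊆ Q`) and `{f', q₀} ∪ S` (`S ⊆ Q \ {q₀}`) are reachable. -/
theorem davies_reachability {Q' Q σ : Type*} [Fintype Q'] [Fintype Q]
    (δ' : Q' → σ → Q') (δ : Q → σ → Q)
    (q₀' f' : Q') (hf : f' ≠ q₀') (q₀ : Q) (F : Set Q)
    (hreach' : ∀ p : Q', ∃ w : List σ, w.foldl δ' q₀' = p)
    (hdist' : ∀ p q : Q', p ≠ q →
      ∃ w : List σ, ¬ ((w.foldl δ' p = f') ↔ (w.foldl δ' q = f')))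
    (hreach : ∀ p : Q, ∃ w : List σ, w.foldl δ q₀ = p)
    (hdist : ∀ p q : Q, p ≠ q →
      ∃ w : List σ, ¬ ((w.foldl δ p ∈ F) ↔ (w.foldl δ q ∈ F)))
    (hbij' : ∀ a : σ, Function.Bijective fun p => δ' p a)
    (hbij : ∀ a : σ, Function.Bijective fun q => δ q a)
    (hsingle : ∀ p' : Q', p' ≠ f' → prodReachable δ' δ q₀' f' q₀ {Sum.inl p'})
    (hpair : ∀ q : Q, prodReachable δ' δ q₀' f' q₀ {Sum.inl q₀', Sum.inr q}) :
    (∀ p' : Q', p' ≠ f' → ∀ S : Set Q,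
      prodReachable δ' δ q₀' f' q₀ ({Sum.inl p'} ∪ Sum.inr '' S)) ∧
    (∀ S : Set Q, q₀ ∉ S →
      prodReachable δ' δ q₀' f' q₀ ({Sum.inl f', Sum.inr q₀} ∪ Sum.inr '' S)) := by
  -- the word taking `q₀'` to `f'` for the first time
  obtain ⟨wf, hwf⟩ := hreach' f'
  obtain ⟨u, hu_ne, hu_end, hu_av⟩ := extract_first_hit δ' q₀' f' hf wf hwf
  have key : ∀ n : ℕ, ∀ p' : Q', p' ≠ f' → ∀ S : Set Q, S.ncard ≤ n →
      prodReachable δ' δ q₀' f' q₀ ({Sum.inl p'} ∪ Sum.inr '' S) := by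
    intro n
    induction n with
    | zero =>
      intro p' hp S hS
      have hS0 : S = ∅ := (Set.ncard_eq_zero (Set.toFinite S)).mp (Nat.le_zero.mp hS)
      subst hS0
      simpa using hsingle p' hp
    | succ n ih =>
      intro p' hp S hS
      by_cases hc : S.ncard ≤ n
      · exact ih p' hp S hc
      have hSn : S.ncard = n + 1 := le_antisymm hS (not_le.mp hc)
      obtain ⟨q₁, hq₁⟩ : S.Nonempty := Set.nonempty_of_ncard_ne_zero (by omega)
      -- word to p' avoiding f'
      obtain ⟨wz, hwz⟩ := hsingle p' hp
      obtain ⟨hz_end, hz_av⟩ := extract_single δ' δ q₀' f' q₀ p' wz hwz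
      -- preimage of q₁ under the action of wz
      obtain ⟨q, hq⟩ := (foldl_bijective δ hbij wz).2 q₁
      -- word from f' back to q₀' avoiding f', planting q
      obtain ⟨wp, hwp⟩ := hpair q
      obtain ⟨y, hy_end, hy_av, hy_q⟩ := extract_pair δ' δ q₀' f' q₀ q wp hwp
      have hq2 : wz.foldl δ q = q₁ := hq
      -- the total action on Q of u ++ y ++ wz
      have hGbij : Function.Bijective (fun x : Q => wz.foldl δ (y.foldl δ (u.foldl δ x))) :=
        ((foldl_bijective δ hbij wz).comp
          ((foldl_bijective δ hbij y).comp (foldl_bijective δ hbij u)))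
      have hGT : (fun x : Q => wz.foldl δ (y.foldl δ (u.foldl δ x))) ''
          ((fun x : Q => wz.foldl δ (y.foldl δ (u.foldl δ x))) ⁻¹' (S \ {q₁})) = S \ {q₁} :=
        Set.image_preimage_eq _ hGbij.2
      have hT : ((fun x : Q => wz.foldl δ (y.foldl δ (u.foldl δ x))) ⁻¹' (S \ {q₁})).ncard ≤ n := by
        have h1 : ((fun x : Q => wz.foldl δ (y.foldl δ (u.foldl δ x))) ''
            ((fun x : Q => wz.foldl δ (y.foldl δ (u.foldl δ x))) ⁻¹' (S \ {q₁}))).ncard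
            = ((fun x : Q => wz.foldl δ (y.foldl δ (u.foldl δ x))) ⁻¹' (S \ {q₁})).ncard :=
          Set.ncard_image_of_injective _ hGbij.1
        rw [hGT] at h1
        have h2 : (S \ {q₁}).ncard = S.ncard - 1 :=
          Set.ncard_diff_singleton_of_mem hq₁
        omega
      obtain ⟨w0, hw0⟩ := ih q₀' (Ne.symm hf)
        ((fun x : Q => wz.foldl δ (y.foldl δ (u.foldl δ x))) ⁻¹' (S \ {q₁})) hT
      refine ⟨w0 ++ (u ++ (y ++ wz)), ?_⟩
      rw [List.foldl_append, hw0, List.foldl_append, List.foldl_append]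
      rw [run_spawn_end δ' δ f' q₀ u q₀' _ hu_ne hu_end hu_av]
      rw [run_pure δ' δ f' q₀ y f' _ hy_av, hy_end]
      rw [run_pure δ' δ f' q₀ wz q₀' _ hz_av, hz_end]
      congr 1
      congr 1
      simp only [Set.image_union, Set.image_image, Set.image_singleton, hy_q, hq2]
      rw [hGT, Set.diff_union_self,
        Set.union_eq_self_of_subset_right (Set.singleton_subset_iff.mpr hq₁)]
  constructor
  · intro p' hp S
    exact key S.ncard p' hp S le_rfl
  · intro S hq₀S
    set T : Set Q := (fun x => u.foldl δ x) ⁻¹' S with hTdef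
    have hGT : (fun x => u.foldl δ x) '' T = S :=
      Set.image_preimage_eq _ (foldl_bijective δ hbij u).2
    obtain ⟨w0, hw0⟩ := key T.ncard q₀' (Ne.symm hf) T le_rfl
    refine ⟨w0 ++ u, ?_⟩
    rw [List.foldl_append, hw0, run_spawn_end δ' δ f' q₀ u q₀' T hu_ne hu_end hu_av, hGT]
    ext x
    rcases x with p | qq <;> simp [or_comm]
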